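/- Crude per-round growth bound for the scale: under the NormalHedge dynamics, if for some round t₀ and some constant 0 < δ ≤ 1/2 one has c_{t₀} ≥ (16 ln N)/δ², then for every round t ≥ t₀, c_{t+1} − c_t ≤ e^δ(4 + 2 ln N). -/

import Mathlib

open Real Finset Filter

/-- The NormalHedge dynamics with `N` actions.  Rounds are indexed by `t = 1, 2, …`;
`loss i t` is the loss of action `i` in round `t`, `p i t` its weight in round `t`,
`R i t` its cumulative regret after `t` rounds, and `c t` the scale parameter. -/
structure NormalHedge (N : ℕ) where
  hN : 2 ≤ N
  loss : Fin N → ℕ → ℝ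
  p : Fin N → ℕ → ℝ
  R : Fin N → ℕ → ℝ
  c : ℕ → ℝ
  loss_mem : ∀ i t, 1 ≤ t → loss i t ∈ Set.Icc (0 : ℝ) 1
  p_one : ∀ i, p i 1 = 1 / N
  R_zero : ∀ i, R i 0 = 0
  R_rec : ∀ i t, R i (t + 1) = R i t + ((∑ j, p j (t + 1) * loss j (t + 1)) - loss i (t + 1))
  c_pos : ∀ t, 1 ≤ t → 0 < c t
  c_eq : ∀ t, 1 ≤ t →
    (1 / N : ℝ) * ∑ i, Real.exp (max (R i t) 0 ^ 2 / (2 * c t)) = Real.exp 1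
  p_rec : ∀ i t, 1 ≤ t →
    p i (t + 1) = (max (R i t) 0 / c t) * Real.exp (max (R i t) 0 ^ 2 / (2 * c t)) /
      ∑ j, (max (R j t) 0 / c t) * Real.exp (max (R j t) 0 ^ 2 / (2 * c t))

lemma aux_exp_ub {s : ℝ} (h : |s| ≤ 1) : Real.exp s ≤ 1 + s + (3/4) * s^2 := by
  have h2 := Real.exp_bound h (n := 2) (by norm_num)
  have he : ∑ m ∈ range 2, s ^ m / m.factorial = 1 + s := by
    simp [Finset.sum_range_succ]
  rw [he] at h2
  norm_num [Nat.factorial] at h2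
  have habs := (abs_sub_le_iff.1 h2).1
  nlinarith [sq_abs s]

lemma aux_upper {c R r : ℝ} (hc : 0 < c) (hr : |r| ≤ 1) (hu : 2 * max R 0 + 1 ≤ 2 * c) :
    Real.exp ((max (R + r) 0) ^ 2 / (2 * c)) ≤
      Real.exp ((max R 0) ^ 2 / (2 * c)) *
        (1 + r * max R 0 / c + (1 / (2 * c) + (3/4) * (max R 0 + 1/2) ^ 2 / c ^ 2)) := by
  set u := max R 0 with hu_def
  have hu0 : 0 ≤ u := le_max_right _ _
  obtain ⟨hrl, hrr⟩ := abs_le.1 hr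
  have hr2 : r ^ 2 ≤ 1 := by nlinarith
  have hx2 : (max (R + r) 0) ^ 2 ≤ (u + r) ^ 2 := by
    have h1 : max (R + r) 0 ≤ |u + r| := by
      apply max_le _ (abs_nonneg _)
      have : R ≤ u := le_max_left _ _
      calc R + r ≤ u + r := by linarith
        _ ≤ |u + r| := le_abs_self _
    have h0 : 0 ≤ max (R + r) 0 := le_max_right _ _
    nlinarith [abs_nonneg (u + r), sq_abs (u + r)]
  have hstep1 : Real.exp ((max (R + r) 0) ^ 2 / (2 * c)) ≤ Real.exp ((u + r) ^ 2 / (2 * c)) := by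
    apply Real.exp_le_exp.2
    exact div_le_div_of_nonneg_right hx2 (by linarith)
  set s := (2 * u * r + r ^ 2) / (2 * c) with hs_def
  have hsum : (u + r) ^ 2 / (2 * c) = u ^ 2 / (2 * c) + s := by
    rw [hs_def]; field_simp; ring
  have habs_num : |2 * u * r + r ^ 2| ≤ 2 * u + 1 := by
    rw [abs_le]; constructor <;> nlinarith
  have hs1 : |s| ≤ 1 := by
    rw [hs_def, abs_div, abs_of_nonneg (by linarith : (0:ℝ) ≤ 2 * c),
      div_le_one (by linarith)]
    linarith
  have hexp_s := aux_exp_ub hs1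
  have hs_eq : s = r * u / c + r ^ 2 / (2 * c) := by
    rw [hs_def]; field_simp
  have hs_le : s ≤ r * u / c + 1 / (2 * c) := by
    rw [hs_eq]
    have : r ^ 2 / (2 * c) ≤ 1 / (2 * c) := by
      apply div_le_div_of_nonneg_right hr2 (by linarith) |>.trans_eq rfl
    linarith
  have hs_sq : s ^ 2 ≤ (u + 1/2) ^ 2 / c ^ 2 := by
    rw [hs_def, div_pow, div_le_div_iff₀ (by positivity) (by positivity)]
    obtain ⟨hbl, hbr⟩ := abs_le.1 habs_num
    have hXsq : (2 * u * r + r ^ 2) ^ 2 ≤ (2 * u + 1) ^ 2 := by nlinarith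
    nlinarith [sq_nonneg c, mul_le_mul_of_nonneg_right hXsq (sq_nonneg c)]
  calc Real.exp ((max (R + r) 0) ^ 2 / (2 * c))
      ≤ Real.exp ((u + r) ^ 2 / (2 * c)) := hstep1
    _ = Real.exp (u ^ 2 / (2 * c)) * Real.exp s := by rw [hsum, Real.exp_add]
    _ ≤ Real.exp (u ^ 2 / (2 * c)) * (1 + s + (3/4) * s ^ 2) := by
        apply mul_le_mul_of_nonneg_left hexp_s (Real.exp_pos _).le
    _ ≤ Real.exp (u ^ 2 / (2 * c)) *
        (1 + r * u / c + (1 / (2 * c) + (3/4) * (u + 1/2) ^ 2 / c ^ 2)) := by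
        apply mul_le_mul_of_nonneg_left _ (Real.exp_pos _).le
        have h34 : (3/4) * s ^ 2 ≤ (3/4) * ((u + 1/2) ^ 2 / c ^ 2) := by linarith
        have : (3/4) * ((u + 1/2) ^ 2 / c ^ 2) = (3/4) * (u + 1/2) ^ 2 / c ^ 2 := by ring
        linarith

lemma aux_lower {c R r : ℝ} (hc : 0 < c) :
    Real.exp ((max R 0) ^ 2 / (2 * c)) * (1 + r * max R 0 / c) ≤
      Real.exp ((max (R + r) 0) ^ 2 / (2 * c)) := by
  set u := max R 0 with hu_def
  have hu0 : 0 ≤ u := le_max_right _ _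
  rcases le_or_gt R 0 with hR | hR
  · -- u might be 0
    have hu_eq : u = 0 := by rw [hu_def]; exact max_eq_right hR
    rw [hu_eq]
    simp only [mul_zero, zero_mul, mul_zero, zero_div, add_zero]
    norm_num
    positivity
  · have hu_eq : u = R := by rw [hu_def]; exact max_eq_left hR.le
    rcases le_or_gt 0 (R + r) with hRr | hRr
    · have hx : max (R + r) 0 = u + r := by rw [hu_eq]; exact max_eq_left hRr
      rw [hx]
      have hsum : (u + r) ^ 2 / (2 * c) = u ^ 2 / (2 * c) + (2 * u * r + r ^ 2) / (2 * c) := by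
        field_simp; ring
      rw [hsum, Real.exp_add]
      apply mul_le_mul_of_nonneg_left _ (Real.exp_pos _).le
      have h1 : r * u / c ≤ (2 * u * r + r ^ 2) / (2 * c) := by
        rw [div_le_div_iff₀ hc (by linarith)]
        nlinarith [sq_nonneg r]
      linarith [Real.add_one_le_exp ((2 * u * r + r ^ 2) / (2 * c))]
    · have hx : max (R + r) 0 = 0 := max_eq_right hRr.le
      rw [hx]
      norm_num
      -- here r < -R = -u, so r * u ≤ -u^2
      have hru : r * u ≤ -u ^ 2 := by nlinarith [hu_eq ▸ hRr]
      have h1 : 1 + r * u / c ≤ 1 - u ^ 2 / c := by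
        apply add_le_add_right
        apply div_le_div_of_nonneg_right hru (by linarith) |>.trans_eq (by ring)
      have h2 : Real.exp (u ^ 2 / (2 * c)) * (1 - u ^ 2 / c) ≤ 1 := by
        have h3 : 1 - u ^ 2 / c ≤ Real.exp (-(u ^ 2 / (2 * c))) := by
          have := Real.add_one_le_exp (-(u ^ 2 / (2 * c)))
          have hd : u ^ 2 / c = 2 * (u ^ 2 / (2 * c)) := by ring
          nlinarith [div_nonneg (sq_nonneg u) (by linarith : (0:ℝ) ≤ 2 * c)]
        calc Real.exp (u ^ 2 / (2 * c)) * (1 - u ^ 2 / c)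
            ≤ Real.exp (u ^ 2 / (2 * c)) * Real.exp (-(u ^ 2 / (2 * c))) :=
              mul_le_mul_of_nonneg_left h3 (Real.exp_pos _).le
          _ = 1 := by rw [← Real.exp_add]; simp
      calc Real.exp (u ^ 2 / (2 * c)) * (1 + r * u / c)
          ≤ Real.exp (u ^ 2 / (2 * c)) * (1 - u ^ 2 / c) :=
            mul_le_mul_of_nonneg_left h1 (Real.exp_pos _).le
        _ ≤ 1 := h2

lemma aux_div (a c c' : ℝ) (hc : c ≠ 0) (hc' : c' ≠ 0) :
    a / (2 * c') * (c' / c) = a / (2 * c) := by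
  field_simp


variable {N : ℕ} (H : NormalHedge N)

lemma NH_sum_exp (t : ℕ) (ht : 1 ≤ t) :
    ∑ i, Real.exp (max (H.R i t) 0 ^ 2 / (2 * H.c t)) = N * Real.exp 1 := by
  have hN : (0:ℝ) < N := by have := H.hN; positivity
  have h := H.c_eq t ht
  field_simp at h
  linarith

lemma NH_term_le (t : ℕ) (ht : 1 ≤ t) (i : Fin N) :
    Real.exp (max (H.R i t) 0 ^ 2 / (2 * H.c t)) ≤ N * Real.exp 1 := by
  rw [← NH_sum_exp H t ht]
  exact Finset.single_le_sum
    (f := fun j => Real.exp (max (H.R j t) 0 ^ 2 / (2 * H.c t)))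
    (fun j _ => (Real.exp_pos _).le) (Finset.mem_univ i)

lemma NH_sq_le (t : ℕ) (ht : 1 ≤ t) (i : Fin N) :
    max (H.R i t) 0 ^ 2 ≤ 2 * H.c t * (Real.log N + 1) := by
  have hN : (0:ℝ) < N := by have := H.hN; positivity
  have h := NH_term_le H t ht i
  have hNe : (N : ℝ) * Real.exp 1 = Real.exp (Real.log N + 1) := by
    rw [Real.exp_add, Real.exp_log hN]
  rw [hNe] at h
  have h2 := Real.exp_le_exp.1 h
  have hc := H.c_pos t ht
  rw [div_le_iff₀ (by linarith)] at h2
  calc max (H.R i t) 0 ^ 2 ≤ (Real.log N + 1) * (2 * H.c t) := h2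
    _ = 2 * H.c t * (Real.log N + 1) := by ring

lemma NH_exists_pos (t : ℕ) (ht : 1 ≤ t) : ∃ i, 0 < max (H.R i t) 0 := by
  have hN : (0:ℝ) < N := by have := H.hN; positivity
  by_contra hcon
  push_neg at hcon
  have hall : ∀ i : Fin N, max (H.R i t) 0 = 0 := fun i =>
    le_antisymm (hcon i) (le_max_right _ _)
  have h := NH_sum_exp H t ht
  simp only [hall] at h
  norm_num [Finset.card_univ] at h
  nlinarith [Real.exp_one_gt_d9]

lemma NH_W_pos (t : ℕ) (ht : 1 ≤ t) :
    0 < ∑ j, (max (H.R j t) 0 / H.c t) * Real.exp (max (H.R j t) 0 ^ 2 / (2 * H.c t)) := by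
  have hc := H.c_pos t ht
  obtain ⟨j, hj⟩ := NH_exists_pos H t ht
  apply Finset.sum_pos'
  · intro i _
    exact mul_nonneg (div_nonneg (le_max_right _ _) hc.le) (Real.exp_pos _).le
  · exact ⟨j, Finset.mem_univ j, mul_pos (div_pos hj hc) (Real.exp_pos _)⟩

lemma NH_p_nonneg (t : ℕ) (ht : 1 ≤ t) (i : Fin N) : 0 ≤ H.p i (t + 1) := by
  rw [H.p_rec i t ht]
  have hc := H.c_pos t ht
  exact div_nonneg (mul_nonneg (div_nonneg (le_max_right _ _) hc.le) (Real.exp_pos _).le)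
    (NH_W_pos H t ht).le

lemma NH_p_sum (t : ℕ) (ht : 1 ≤ t) : ∑ i, H.p i (t + 1) = 1 := by
  have hW := NH_W_pos H t ht
  rw [Finset.sum_congr rfl (fun i _ => H.p_rec i t ht), ← Finset.sum_div]
  exact div_self hW.ne'

lemma NH_L_mem (t : ℕ) (ht : 1 ≤ t) :
    (∑ j, H.p j (t + 1) * H.loss j (t + 1)) ∈ Set.Icc (0 : ℝ) 1 := by
  constructor
  · apply Finset.sum_nonneg
    intro j _
    exact mul_nonneg (NH_p_nonneg H t ht j) (H.loss_mem j (t+1) (by omega)).1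
  · have h1 : ∑ j, H.p j (t + 1) * H.loss j (t + 1) ≤ ∑ j, H.p j (t + 1) := by
      apply Finset.sum_le_sum
      intro j _
      nlinarith [NH_p_nonneg H t ht j, (H.loss_mem j (t+1) (by omega)).1,
        (H.loss_mem j (t+1) (by omega)).2]
    rw [NH_p_sum H t ht] at h1
    exact h1

lemma NH_sum_wr (t : ℕ) (ht : 1 ≤ t) :
    ∑ i, (max (H.R i t) 0 / H.c t) * Real.exp (max (H.R i t) 0 ^ 2 / (2 * H.c t)) *
      ((∑ j, H.p j (t + 1) * H.loss j (t + 1)) - H.loss i (t + 1)) = 0 := by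
  have hW := NH_W_pos H t ht
  set W := ∑ j, (max (H.R j t) 0 / H.c t) * Real.exp (max (H.R j t) 0 ^ 2 / (2 * H.c t)) with hW_def
  set L := ∑ j, H.p j (t + 1) * H.loss j (t + 1) with hL_def
  have hw_eq : ∀ i, (max (H.R i t) 0 / H.c t) * Real.exp (max (H.R i t) 0 ^ 2 / (2 * H.c t))
      = H.p i (t + 1) * W := by
    intro i
    rw [H.p_rec i t ht, ← hW_def, div_mul_cancel₀ _ hW.ne']
  calc ∑ i, (max (H.R i t) 0 / H.c t) * Real.exp (max (H.R i t) 0 ^ 2 / (2 * H.c t)) *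
        (L - H.loss i (t + 1))
      = ∑ i, (H.p i (t + 1) * W) * (L - H.loss i (t + 1)) := by
        exact Finset.sum_congr rfl (fun i _ => by rw [hw_eq i])
    _ = W * ∑ i, (H.p i (t + 1) * L - H.p i (t + 1) * H.loss i (t + 1)) := by
        rw [Finset.mul_sum]
        exact Finset.sum_congr rfl (fun i _ => by ring)
    _ = W * ((∑ i, H.p i (t + 1) * L) - L) := by
        rw [Finset.sum_sub_distrib, hL_def]
    _ = W * (1 * L - L) := by rw [← Finset.sum_mul, NH_p_sum H t ht]
    _ = 0 := by ring

lemma NH_r_abs (t : ℕ) (ht : 1 ≤ t) (i : Fin N) :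
    |(∑ j, H.p j (t + 1) * H.loss j (t + 1)) - H.loss i (t + 1)| ≤ 1 := by
  obtain ⟨hL0, hL1⟩ := NH_L_mem H t ht
  obtain ⟨hl0, hl1⟩ := H.loss_mem i (t+1) (by omega)
  rw [abs_le]
  constructor <;> linarith

lemma NH_sum_lower (t : ℕ) (ht : 1 ≤ t) :
    (N : ℝ) * Real.exp 1 ≤ ∑ i, Real.exp (max (H.R i (t+1)) 0 ^ 2 / (2 * H.c t)) := by
  have hc := H.c_pos t ht
  set L := ∑ j, H.p j (t + 1) * H.loss j (t + 1) with hL_def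
  have hterm : ∀ i : Fin N,
      Real.exp (max (H.R i t) 0 ^ 2 / (2 * H.c t)) +
        (max (H.R i t) 0 / H.c t) * Real.exp (max (H.R i t) 0 ^ 2 / (2 * H.c t)) *
          (L - H.loss i (t+1))
      ≤ Real.exp (max (H.R i (t+1)) 0 ^ 2 / (2 * H.c t)) := by
    intro i
    have h := aux_lower (c := H.c t) (R := H.R i t) (r := L - H.loss i (t+1)) hc
    rw [← H.R_rec i t] at h
    calc Real.exp (max (H.R i t) 0 ^ 2 / (2 * H.c t)) +
          (max (H.R i t) 0 / H.c t) * Real.exp (max (H.R i t) 0 ^ 2 / (2 * H.c t)) *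
            (L - H.loss i (t+1))
        = Real.exp (max (H.R i t) 0 ^ 2 / (2 * H.c t)) *
            (1 + (L - H.loss i (t+1)) * max (H.R i t) 0 / H.c t) := by ring
      _ ≤ _ := h
  have hsum := Finset.sum_le_sum (s := Finset.univ) (fun i (_ : i ∈ Finset.univ) => hterm i)
  rw [Finset.sum_add_distrib, NH_sum_exp H t ht, NH_sum_wr H t ht, add_zero] at hsum
  exact hsum

lemma NH_mono (t : ℕ) (ht : 1 ≤ t) : H.c t ≤ H.c (t + 1) := by
  by_contra hcon
  push_neg at hcon
  have hc := H.c_pos t ht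
  have hc' := H.c_pos (t+1) (by omega)
  have hlow := NH_sum_lower H t ht
  have hup := NH_sum_exp H (t+1) (by omega)
  obtain ⟨j, hj⟩ := NH_exists_pos H (t+1) (by omega)
  have hstrict : ∑ i, Real.exp (max (H.R i (t+1)) 0 ^ 2 / (2 * H.c t)) <
      ∑ i, Real.exp (max (H.R i (t+1)) 0 ^ 2 / (2 * H.c (t+1))) := by
    apply Finset.sum_lt_sum
    · intro i _
      apply Real.exp_le_exp.2
      apply div_le_div_of_nonneg_left (sq_nonneg _) (by linarith) (by linarith)
    · refine ⟨j, Finset.mem_univ j, ?_⟩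
      apply Real.exp_lt_exp.2
      apply div_lt_div_of_pos_left (by positivity) (by linarith) (by linarith)
  linarith

set_option maxHeartbeats 1000000 in
lemma NH_step (t : ℕ) (ht : 1 ≤ t) (hc64 : 64 * Real.log N ≤ H.c t) :
    H.c (t + 1) - H.c t ≤ 11/4 + 3/2 * Real.log N := by
  have hN2 := H.hN
  have hK : (0.6931471803 : ℝ) ≤ Real.log N := by
    calc (0.6931471803 : ℝ) ≤ Real.log 2 := Real.log_two_gt_d9.le
      _ ≤ Real.log N := Real.log_le_log (by norm_num) (by exact_mod_cast hN2)
  set K := Real.log N with hK_def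
  have hc := H.c_pos t ht
  set c := H.c t with hc_def
  rcases le_or_gt (H.c (t+1)) c with hle | hlt
  · nlinarith
  -- main case
  have hcbig : (44 : ℝ) ≤ c := by nlinarith
  set L := ∑ j, H.p j (t + 1) * H.loss j (t + 1) with hL_def
  -- the per-expert bound u_i ≤ c - 1/2
  have hQ : 2 * c * (K + 1) ≤ (c - 1/2) ^ 2 := by nlinarith
  have hule : ∀ i : Fin N, max (H.R i t) 0 ≤ c - 1/2 := by
    intro i
    have h1 := NH_sq_le H t ht i
    have h0 : (0:ℝ) ≤ max (H.R i t) 0 := le_max_right _ _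
    nlinarith
  -- per-term upper bound
  have hterm : ∀ i : Fin N,
      Real.exp (max (H.R i (t+1)) 0 ^ 2 / (2 * c)) ≤
        Real.exp (max (H.R i t) 0 ^ 2 / (2 * c)) +
        (max (H.R i t) 0 / c) * Real.exp (max (H.R i t) 0 ^ 2 / (2 * c)) *
          (L - H.loss i (t+1)) +
        Real.exp (max (H.R i t) 0 ^ 2 / (2 * c)) * ((11/4 + 3/2 * K) / c) := by
    intro i
    set u := max (H.R i t) 0 with hu_def
    set r := L - H.loss i (t+1) with hr_def
    have hu0 : (0:ℝ) ≤ u := le_max_right _ _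
    have hrabs : |r| ≤ 1 := NH_r_abs H t ht i
    have h2u : 2 * u + 1 ≤ 2 * c := by
      have := hule i; linarith
    have ha := aux_upper (c := c) (R := H.R i t) (r := r) hc hrabs (by rw [← hu_def]; linarith)
    rw [← H.R_rec i t] at ha
    have hcoef : 1 / (2 * c) + (3/4) * (u + 1/2) ^ 2 / c ^ 2 ≤ (11/4 + 3/2 * K) / c := by
      have h1 := NH_sq_le H t ht i
      rw [← hu_def, ← hK_def] at h1
      have hsq : (u + 1/2) ^ 2 ≤ 2 * c * K + 3 * c := by
        have := hule i
        nlinarith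
      rw [div_add_div _ _ (by positivity) (by positivity), div_le_div_iff₀ (by positivity) (by positivity)]
      nlinarith [sq_nonneg c]
    calc Real.exp (max (H.R i (t+1)) 0 ^ 2 / (2 * c))
        ≤ Real.exp (u ^ 2 / (2 * c)) * (1 + r * u / c + (1 / (2 * c) + (3/4) * (u + 1/2) ^ 2 / c ^ 2)) := ha
      _ ≤ Real.exp (u ^ 2 / (2 * c)) * (1 + r * u / c + (11/4 + 3/2 * K) / c) := by
          apply mul_le_mul_of_nonneg_left _ (Real.exp_pos _).le
          linarith
      _ = Real.exp (u ^ 2 / (2 * c)) + (u / c) * Real.exp (u ^ 2 / (2 * c)) * r +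
          Real.exp (u ^ 2 / (2 * c)) * ((11/4 + 3/2 * K) / c) := by ring
  -- sum it
  have hsum := Finset.sum_le_sum (s := Finset.univ) (fun i (_ : i ∈ Finset.univ) => hterm i)
  rw [Finset.sum_add_distrib, Finset.sum_add_distrib, NH_sum_exp H t ht, NH_sum_wr H t ht,
    add_zero, ← Finset.sum_mul, NH_sum_exp H t ht] at hsum
  -- hsum : ∑ exp(x²/2c) ≤ N e + N e * ((11/4+3/2K)/c)
  -- Jensen step
  have hc' := H.c_pos (t+1) (by omega)
  set c' := H.c (t+1) with hc'_def
  set q := c' / c with hq_def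
  have hq1 : 1 ≤ q := by
    rw [hq_def, le_div_iff₀ hc]
    linarith
  have hzq : ∀ i : Fin N,
      Real.exp (max (H.R i (t+1)) 0 ^ 2 / (2 * c')) ^ q
        = Real.exp (max (H.R i (t+1)) 0 ^ 2 / (2 * c)) := by
    intro i
    rw [← Real.exp_mul, aux_div _ _ _ hc.ne' hc'.ne']
  have hNpos : (0:ℝ) < N := by positivity
  have hJ := Real.rpow_arith_mean_le_arith_mean_rpow Finset.univ (fun _ : Fin N => 1 / (N:ℝ))
    (fun i => Real.exp (max (H.R i (t+1)) 0 ^ 2 / (2 * c')))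
    (fun i _ => by positivity)
    (by simp [Finset.card_univ]; field_simp)
    (fun i _ => (Real.exp_pos _).le) hq1
  have hceq := H.c_eq (t+1) (by omega)
  rw [← hc'_def] at hceq
  rw [← Finset.mul_sum, hceq, Real.exp_one_rpow] at hJ
  have hJ2 : ∑ i : Fin N, (1 / (N:ℝ)) *
      Real.exp (max (H.R i (t+1)) 0 ^ 2 / (2 * c')) ^ q
      = (1 / (N:ℝ)) * ∑ i, Real.exp (max (H.R i (t+1)) 0 ^ 2 / (2 * c)) := by
    rw [← Finset.mul_sum]
    congr 1
    exact Finset.sum_congr rfl (fun i _ => hzq i)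
  rw [hJ2] at hJ
  -- hJ : exp q ≤ (1/N) * ∑ exp(x²/2c)
  have hfinal : Real.exp q ≤ Real.exp 1 * (1 + (11/4 + 3/2 * K) / c) := by
    have h3 : (1 / (N:ℝ)) * ∑ i, Real.exp (max (H.R i (t+1)) 0 ^ 2 / (2 * c)) ≤
        (1 / (N:ℝ)) * ((N:ℝ) * Real.exp 1 + (N:ℝ) * Real.exp 1 * ((11/4 + 3/2 * K) / c)) := by
      apply mul_le_mul_of_nonneg_left hsum (by positivity)
    have h4 : (1 / (N:ℝ)) * ((N:ℝ) * Real.exp 1 + (N:ℝ) * Real.exp 1 * ((11/4 + 3/2 * K) / c))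
        = Real.exp 1 * (1 + (11/4 + 3/2 * K) / c) := by
      field_simp
    rw [h4] at h3
    exact hJ.trans h3
  have hq_le : q ≤ 1 + (11/4 + 3/2 * K) / c := by
    have h5 : Real.exp q = Real.exp 1 * Real.exp (q - 1) := by
      rw [← Real.exp_add]
      congr 1
      ring
    rw [h5] at hfinal
    have h6 : Real.exp (q - 1) ≤ 1 + (11/4 + 3/2 * K) / c :=
      le_of_mul_le_mul_left (by linarith [hfinal]) (Real.exp_pos 1)
    linarith [Real.add_one_le_exp (q - 1)]
  -- conclude
  have h7 : c' - c ≤ c * ((11/4 + 3/2 * K) / c) := by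
    have : c' = c * q := by rw [hq_def]; field_simp
    nlinarith
  have h8 : c * ((11/4 + 3/2 * K) / c) = 11/4 + 3/2 * K := by
    field_simp
  linarith

/-- Crude per-round growth bound for the scale: if `c t₀ ≥ (16 ln N)/δ²` with
`0 < δ ≤ 1/2`, then for every `t ≥ t₀`, `c (t+1) - c t ≤ e^δ (4 + 2 ln N)`. -/
theorem normalHedge_scale_increment_bound_crude {N : ℕ} (H : NormalHedge N)
    (t₀ : ℕ) (ht₀ : 1 ≤ t₀) (δ : ℝ) (hδ0 : 0 < δ) (hδ1 : δ ≤ 1 / 2)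
    (hc : 16 * Real.log N / δ ^ 2 ≤ H.c t₀)
    (t : ℕ) (ht : t₀ ≤ t) :
    H.c (t + 1) - H.c t ≤ Real.exp δ * (4 + 2 * Real.log N) := by
  have hN2 := H.hN
  have hK : (0.6931471803 : ℝ) ≤ Real.log N := by
    calc (0.6931471803 : ℝ) ≤ Real.log 2 := Real.log_two_gt_d9.le
      _ ≤ Real.log N := Real.log_le_log (by norm_num) (by exact_mod_cast hN2)
  have hKpos : (0:ℝ) < Real.log N := by linarith
  have hc64 : ∀ s : ℕ, t₀ ≤ s → 64 * Real.log N ≤ H.c s := by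
    intro s hs
    induction s, hs using Nat.le_induction with
    | base =>
      have hδ2 : δ ^ 2 ≤ 1 / 4 := by nlinarith
      have hδ2pos : (0:ℝ) < δ ^ 2 := by positivity
      have h1 : 64 * Real.log N ≤ 16 * Real.log N / δ ^ 2 := by
        rw [le_div_iff₀ hδ2pos]
        nlinarith
      linarith
    | succ n hn ih =>
      have := NH_mono H n (by omega)
      linarith
  have hstep := NH_step H t (by omega) (hc64 t ht)
  have hexp : (1:ℝ) ≤ Real.exp δ := Real.one_le_exp hδ0.le
  nlinarith [mul_nonneg (by linarith : (0:ℝ) ≤ Real.exp δ - 1)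
    (by linarith : (0:ℝ) ≤ 4 + 2 * Real.log N)]
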